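/- arXiv:1301.0079 — 3 statements merged into one kernel-verified Lean document; each statement's English description precedes it below -/
import Mathlib

section
/- Let X, Y be finite random variables with joint pmf P, G the characteristic graph of X (edges between confusable pairs). Then the zero-distortion value of the zero-delay rate-distortion function equals L_Y(X); precisely, min over pairs (f,h), with f: 𝒳 → 𝒵 and h: 𝒵 × 𝒴 → 𝒳 satisfying h(y, f(x)) = x for all (x,y) with P(x,y) > 0, of L_Y(f(X)), is equal to L_Y(X). -/
open scoped BigOperators

def Confusable {X Y : Type} [Fintype Y] (P : X → Y → ℝ) (x x' : X) : Prop :=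
  x ≠ x' ∧ ∃ y : Y, 0 < P x y ∧ 0 < P x' y

def RIvalid {X Y : Type} [Fintype Y] (P : X → Y → ℝ) (φ : X → List Bool) : Prop :=
  ∀ x x', Confusable P x x' → ¬ (φ x <+: φ x')

noncomputable def expLen {X Y : Type} [Fintype X] [Fintype Y]
    (P : X → Y → ℝ) (φ : X → List Bool) : ℝ :=
  ∑ x, (∑ y, P x y) * ((φ x).length : ℝ)

/-- `L_Y(W)`: minimal expected RI-protocol length for the joint pmf of `(W,Y)`. -/
noncomputable def LY {W Y : Type} [Fintype W] [Fintype Y] (Q : W → Y → ℝ) : ℝ :=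
  sInf {r : ℝ | ∃ φ : W → List Bool, RIvalid Q φ ∧ r = expLen Q φ}

/-- Joint pmf of `(f(X), Y)` induced by `f` and the joint pmf of `(X,Y)`. -/
noncomputable def push {X Y Z : Type} [Fintype X] [DecidableEq Z]
    (P : X → Y → ℝ) (f : X → Z) : Z → Y → ℝ :=
  fun z y => ∑ x with f x = z, P x y

lemma unary_inj : ∀ a b : ℕ,
    (List.replicate a true ++ [false]) <+: (List.replicate b true ++ [false]) → a = b := by
  intro a
  induction a with
  | zero =>
    intro b h
    cases b with
    | zero => rfl
    | succ b => simp [List.replicate_succ, List.cons_prefix_cons] at h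
  | succ a ih =>
    intro b h
    cases b with
    | zero => simp [List.replicate_succ, List.cons_prefix_cons] at h
    | succ b =>
      simp only [List.replicate_succ, List.cons_append, List.cons_prefix_cons] at h
      exact congrArg Nat.succ (ih b h.2)

lemma exists_RIvalid {W Y : Type} [Fintype W] [Fintype Y] (Q : W → Y → ℝ) :
    ∃ φ : W → List Bool, RIvalid Q φ := by
  classical
  let e := Fintype.equivFin W
  refine ⟨fun w => List.replicate (e w : ℕ) true ++ [false], ?_⟩
  intro x x' hc hpre
  exact hc.1 (e.injective (Fin.ext (unary_inj _ _ hpre)))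

lemma expLen_nonneg {X Y : Type} [Fintype X] [Fintype Y]
    (P : X → Y → ℝ) (h0 : ∀ x y, 0 ≤ P x y) (φ : X → List Bool) :
    0 ≤ expLen P φ := by
  refine Finset.sum_nonneg fun x _ => mul_nonneg ?_ (Nat.cast_nonneg _)
  exact Finset.sum_nonneg fun y _ => h0 x y

lemma push_id {X Y : Type} [Fintype X] [Fintype Y] [DecidableEq X]
    (P : X → Y → ℝ) : push P id = P := by
  funext z y
  simp [push, Finset.sum_filter, Finset.sum_ite_eq']

lemma expLen_push {X Y Z : Type} [Fintype X] [Fintype Y] [Fintype Z] [DecidableEq Z]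
    (P : X → Y → ℝ) (f : X → Z) (φ : Z → List Bool) :
    expLen (push P f) φ = expLen P (fun x => φ (f x)) := by
  unfold expLen push
  rw [← Finset.sum_fiberwise Finset.univ f
    (fun x => (∑ y, P x y) * ((φ (f x)).length : ℝ))]
  refine Finset.sum_congr rfl fun z _ => ?_
  rw [Finset.sum_comm, Finset.sum_mul]
  refine Finset.sum_congr rfl fun x hx => ?_
  have : f x = z := (Finset.mem_filter.mp hx).2
  rw [this]

lemma LY_le_push {X Y : Type} [Fintype X] [Fintype Y] [DecidableEq X]
    (P : X → Y → ℝ) (hP0 : ∀ x y, 0 ≤ P x y)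
    (f : X → X) (h : Y → X → X) (hh : ∀ x y, 0 < P x y → h y (f x) = x) :
    LY P ≤ LY (push P f) := by
  classical
  obtain ⟨φ0, hφ0⟩ := exists_RIvalid (push P f)
  refine le_csInf ⟨_, φ0, hφ0, rfl⟩ ?_
  rintro r ⟨φ, hφ, rfl⟩
  have hbdd : BddBelow {r : ℝ | ∃ ψ : X → List Bool, RIvalid P ψ ∧ r = expLen P ψ} :=
    ⟨0, by rintro r ⟨ψ, _, rfl⟩; exact expLen_nonneg P hP0 ψ⟩
  refine csInf_le hbdd ⟨fun x => φ (f x), ?_, expLen_push P f φ⟩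
  rintro x x' ⟨hne, y, hx, hx'⟩ hpre
  have hfne : f x ≠ f x' := by
    intro hfe
    exact hne (by rw [← hh x y hx, hfe, hh x' y hx'])
  refine hφ (f x) (f x') ⟨hfne, y, ?_, ?_⟩ hpre
  · refine Finset.sum_pos' (fun a _ => hP0 a y) ⟨x, ?_, hx⟩
    simp
  · refine Finset.sum_pos' (fun a _ => hP0 a y) ⟨x', ?_, hx'⟩
    simp

/-- the zero-distortion value of the zero-delay rate-distortion function
is `L_Y(X)`: the minimum of `L_Y(f(X))` over encoder/decoder pairs `(f,h)` achieving
zero error on the support of `P` (with `|𝒵| ≤ |𝒳|`, so w.l.o.g. `𝒵 = 𝒳`) equals `L_Y(X)`. -/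
theorem zero_distortion_LY {X Y : Type} [Fintype X] [Fintype Y] [DecidableEq X]
    (P : X → Y → ℝ)
    (hP0 : ∀ x y, 0 ≤ P x y)
    (hP1 : ∑ x, ∑ y, P x y = 1) :
    sInf {r : ℝ | ∃ (f : X → X) (h : Y → X → X),
        (∀ x y, 0 < P x y → h y (f x) = x) ∧ r = LY (push P f)} = LY P := by
  classical
  set S := {r : ℝ | ∃ (f : X → X) (h : Y → X → X),
      (∀ x y, 0 < P x y → h y (f x) = x) ∧ r = LY (push P f)} with hS
  have hmem : LY P ∈ S :=
    ⟨id, fun _ z => z, fun x y _ => rfl, by rw [push_id]⟩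
  have hlb : ∀ r ∈ S, LY P ≤ r := by
    rintro r ⟨f, h, hh, rfl⟩
    exact LY_le_push P hP0 f h hh
  exact le_antisymm (csInf_le ⟨LY P, hlb⟩ hmem) (le_csInf ⟨_, hmem⟩ hlb)
end

section
/- Consider a uniform source X over an alphabet of size M ≥ 2, Hamming distortion, and side information Y with P(Y=x | X=x) = 1−p and P(Y=y | X=x) = p/(M−1) for y ≠ x, where 0 < p < 1. For any partition of the source alphabet into K nonempty subsets with the decoder outputting the maximum-likelihood estimate given the subset index and Y, the resulting expected Hamming distortion equals (p/(M−1))·(M − K). -/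
open scoped BigOperators

/-- uniform source over `M` symbols, symmetric side-information channel
with crossover `p`, Hamming distortion. For any partition into `K` nonempty subsets,
with the maximum-likelihood decoder (output `y` if `y` lies in the announced subset,
otherwise a fixed representative of the subset), the expected Hamming distortion is
`(p/(M−1))·(M−K)`. -/
theorem uniform_source_partition_distortion
    {α : Type} [Fintype α] [DecidableEq α]
    (M : ℕ) (hM : Fintype.card α = M) (hM2 : 2 ≤ M)
    (p : ℝ) (hp0 : 0 < p) (hp1 : p < ((M:ℝ) - 1) / M)
    (K : ℕ) (A : Fin K → Finset α)
    (hne : ∀ z, (A z).Nonempty)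
    (hdisj : ∀ z z', z ≠ z' → Disjoint (A z) (A z'))
    (hcover : ∀ x : α, ∃ z, x ∈ A z)
    (e : α → Fin K) (he : ∀ x, x ∈ A (e x))
    (a : Fin K → α) (ha : ∀ z, a z ∈ A z) :
    (∑ x : α, ∑ y : α,
        ((1 / (M:ℝ)) * (if y = x then 1 - p else p / ((M:ℝ) - 1))) *
          (if (if y ∈ A (e x) then y else a (e x)) = x then 0 else 1)) =
      (p / ((M:ℝ) - 1)) * ((M:ℝ) - K) := by
  classical
  have hMR : (2:ℝ) ≤ (M:ℝ) := by exact_mod_cast hM2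
  have hMne : (M:ℝ) ≠ 0 := by linarith
  have hM1ne : (M:ℝ) - 1 ≠ 0 := by linarith
  -- uniqueness of the subset index
  have heq : ∀ {x : α} {z : Fin K}, x ∈ A z → e x = z := by
    intro x z hx
    by_contra h
    exact Finset.disjoint_left.mp (hdisj _ _ h) (he x) hx
  set c : ℝ := (1 / (M:ℝ)) * (p / ((M:ℝ) - 1)) with hc
  -- the error set for source symbol x
  set E : α → Finset α := fun x =>
    if a (e x) = x then (A (e x)).erase x else Finset.univ.erase x with hE
  have key : ∀ x : α, (∑ y : α,
      ((1 / (M:ℝ)) * (if y = x then 1 - p else p / ((M:ℝ) - 1))) *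
        (if (if y ∈ A (e x) then y else a (e x)) = x then 0 else 1)) =
      c * ((E x).card : ℝ) := by
    intro x
    have hterm : ∀ y : α,
        ((1 / (M:ℝ)) * (if y = x then 1 - p else p / ((M:ℝ) - 1))) *
          (if (if y ∈ A (e x) then y else a (e x)) = x then 0 else 1) =
        c * (if y ∈ E x then 1 else 0) := by
      intro y
      by_cases hyx : y = x
      · subst hyx
        have h2 : y ∉ E y := by
          simp only [hE]
          split <;> simp
        rw [if_pos (he y)]
        simp [h2]
      · by_cases hyA : y ∈ A (e x)
        · have h2 : y ∈ E x := by
            simp only [hE]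
            split <;> simp [hyx, hyA]
          rw [if_pos hyA, if_neg hyx, if_neg hyx, if_pos h2, hc]
        · rw [if_neg hyA, if_neg hyx]
          by_cases hax : a (e x) = x
          · have h2 : y ∉ E x := by
              simp only [hE, if_pos hax]
              simp [hyA]
            rw [if_pos hax, if_neg h2]
          · have h2 : y ∈ E x := by
              simp only [hE, if_neg hax]
              simp [hyx]
            rw [if_neg hax, if_pos h2, hc]
    rw [Finset.sum_congr rfl fun y _ => hterm y, ← Finset.mul_sum]
    congr 1
    rw [Finset.sum_ite_mem, Finset.univ_inter, Finset.sum_const]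
    simp
  rw [Finset.sum_congr rfl fun x _ => key x, ← Finset.mul_sum]
  -- compute the total number of error pairs fiberwise
  have hfiber : ∀ z : Fin K, Finset.univ.filter (fun x => e x = z) = A z := by
    intro z
    ext x
    simp only [Finset.mem_filter, Finset.mem_univ, true_and]
    constructor
    · rintro rfl; exact he x
    · intro hx; exact heq hx
  have hsumcard : ∑ z : Fin K, ((A z).card : ℝ) = (M : ℝ) := by
    have := Finset.card_eq_sum_card_fiberwise
      (f := e) (s := (Finset.univ : Finset α)) (t := (Finset.univ : Finset (Fin K)))
      (fun x _ => Finset.mem_univ _)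
    have h2 : ∑ z : Fin K, (A z).card = M := by
      calc ∑ z : Fin K, (A z).card
          = ∑ z : Fin K, (Finset.univ.filter (fun x => e x = z)).card :=
            Finset.sum_congr rfl fun z _ => by rw [hfiber z]
        _ = Finset.univ.card := this.symm
        _ = M := by rw [Finset.card_univ, hM]
    exact_mod_cast h2
  have hEcard : ∑ x : α, ((E x).card : ℝ) = (M:ℝ) * ((M:ℝ) - K) := by
    rw [← Finset.sum_fiberwise Finset.univ e (fun x => ((E x).card : ℝ))]
    have hz : ∀ z : Fin K, ∑ x ∈ Finset.univ.filter (fun x => e x = z),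
        ((E x).card : ℝ) = ((A z).card : ℝ) * (M:ℝ) - (M:ℝ) := by
      intro z
      rw [hfiber z]
      have hEx : ∀ x ∈ A z, ((E x).card : ℝ) =
          if a z = x then ((A z).card : ℝ) - 1 else (M:ℝ) - 1 := by
        intro x hx
        have hex : e x = z := heq hx
        by_cases hax : a z = x
        · have : E x = (A z).erase x := by
            simp only [hE, hex, if_pos hax]
          rw [this, Finset.card_erase_of_mem hx, if_pos hax]
          have h1 : 1 ≤ (A z).card := Finset.card_pos.mpr ⟨x, hx⟩
          push_cast [Nat.cast_sub h1]
          ring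
        · have : E x = Finset.univ.erase x := by
            simp only [hE, hex, if_neg hax]
          rw [this, Finset.card_erase_of_mem (Finset.mem_univ x), Finset.card_univ, hM,
            if_neg hax]
          have h1 : 1 ≤ M := by omega
          push_cast [Nat.cast_sub h1]
          ring
      rw [Finset.sum_congr rfl hEx, ← Finset.add_sum_erase _ _ (ha z), if_pos rfl]
      have hrest : ∑ x ∈ (A z).erase (a z),
          (if a z = x then ((A z).card : ℝ) - 1 else (M:ℝ) - 1) =
          (((A z).card : ℝ) - 1) * ((M:ℝ) - 1) := by
        rw [Finset.sum_congr rfl (fun x hx => if_neg (Finset.ne_of_mem_erase hx).symm),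
          Finset.sum_const, Finset.card_erase_of_mem (ha z)]
        have h1 : 1 ≤ (A z).card := Finset.card_pos.mpr (hne z)
        rw [nsmul_eq_mul, Nat.cast_sub h1, Nat.cast_one]
      rw [hrest]
      ring
    rw [Finset.sum_congr rfl fun z _ => hz z, Finset.sum_sub_distrib, ← Finset.sum_mul,
      hsumcard, Finset.sum_const, Finset.card_univ, Fintype.card_fin]
    ring
  rw [hEcard, hc]
  field_simp
end

section
/- Let X be uniform over {0,1,2,3,4} and let Y be obtained from X by the 'typewriter' channel P(Y=x|X=x) = P(Y=x+1 mod 5|X=x) = 1/2, so the characteristic graph of (X,Y) is the 5-cycle C₅. Any RI protocol whose codeword assignment factors through a proper 3-coloring of C₅ (symbols with the same color get the same codeword, and codewords of any two distinct colors must satisfy the mutual prefix-free condition because the color graph of a minimal coloring of C₅ is complete) has expected length at least 8/5, whereas there exists a valid RI protocol (using four distinct codewords) with expected length 7/5. -/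
open scoped BigOperators

/-- Adjacency of the 5-cycle `C₅` on `Fin 5` (characteristic graph of the
"typewriter" channel on 5 symbols). -/
def AdjC5 (x y : Fin 5) : Prop := x ≠ y ∧ (y = x + 1 ∨ x = y + 1)

/-- Among three mutually prefix-free words, two of them have total length ≥ 3. -/
lemma three_words (u v z : List Bool) (h1 : ¬ u <+: v) (h2 : ¬ u <+: z)
    (h3 : ¬ v <+: z) (h4 : ¬ z <+: u) : 3 ≤ u.length + v.length := by
  by_contra h
  have hu : u ≠ [] := by rintro rfl; exact h1 List.nil_prefix
  have hv : v ≠ [] := by rintro rfl; exact h3 List.nil_prefix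
  have hz : z ≠ [] := by rintro rfl; exact h4 List.nil_prefix
  have hlu : u.length = 1 := by
    have := List.length_pos_iff.2 hu; have := List.length_pos_iff.2 hv; omega
  have hlv : v.length = 1 := by
    have := List.length_pos_iff.2 hu; have := List.length_pos_iff.2 hv; omega
  obtain ⟨a, rfl⟩ := List.length_eq_one_iff.1 hlu
  obtain ⟨b, rfl⟩ := List.length_eq_one_iff.1 hlv
  obtain ⟨c, t, rfl⟩ : ∃ c t, z = c :: t := by
    cases z with
    | nil => exact absurd rfl hz
    | cons c t => exact ⟨c, t, rfl⟩
  have hab : a ≠ b := by rintro rfl; exact h1 (List.prefix_refl _)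
  cases a <;> cases b <;> cases c <;> simp_all [List.cons_prefix_cons]

lemma key (L : Fin 3 → ℕ) (c : Fin 5 → Fin 3)
    (p01 : 3 ≤ L 0 + L 1) (p02 : 3 ≤ L 0 + L 2) (p12 : 3 ≤ L 1 + L 2)
    (q0 : 1 ≤ L 0) (q1 : 1 ≤ L 1) (q2 : 1 ≤ L 2)
    (e01 : c 0 ≠ c 1) (e12 : c 1 ≠ c 2) (e23 : c 2 ≠ c 3)
    (e34 : c 3 ≠ c 4) (e40 : c 4 ≠ c 0) :
    8 ≤ L (c 0) + L (c 1) + L (c 2) + L (c 3) + L (c 4) := by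
  have hv : ∀ v : Fin 3, v = 0 ∨ v = 1 ∨ v = 2 := by decide
  rcases hv (c 0) with h|h|h <;> rw [h] at e01 e40 ⊢ <;>
  rcases hv (c 1) with g|g|g <;> rw [g] at e01 e12 ⊢ <;>
  rcases hv (c 2) with i|i|i <;> rw [i] at e12 e23 ⊢ <;>
  rcases hv (c 3) with j|j|j <;> rw [j] at e23 e34 ⊢ <;>
  rcases hv (c 4) with k|k|k <;> rw [k] at e34 e40 ⊢ <;>
  first
    | exact absurd rfl e01 | exact absurd rfl e12 | exact absurd rfl e23
    | exact absurd rfl e34 | exact absurd rfl e40 | omega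


/-- for `X` uniform on `Fin 5` with typewriter side information
(characteristic graph `C₅`): every RI protocol that factors through a proper
3-coloring of `C₅` with mutually prefix-free color codewords has expected length
at least `8/5`, while there exists a valid RI protocol (with four distinct
codewords) of expected length `7/5`. -/
theorem pentagon_coloring_vs_RI :
    (∀ (c : Fin 5 → Fin 3) (w : Fin 3 → List Bool),
      (∀ x y, AdjC5 x y → c x ≠ c y) →
      (∀ i j : Fin 3, i ≠ j → ¬ (w i <+: w j)) →
      (8 : ℝ) / 5 ≤ (1 / 5 : ℝ) * ∑ x : Fin 5, ((w (c x)).length : ℝ)) ∧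
    (∃ φ : Fin 5 → List Bool,
      (∀ x y, AdjC5 x y → ¬ (φ x <+: φ y)) ∧
      (1 / 5 : ℝ) * ∑ x : Fin 5, ((φ x).length : ℝ) = 7 / 5) := by
  constructor
  · intro c w hcol hpf
    have q : ∀ i : Fin 3, 1 ≤ (w i).length := by
      intro i
      rcases Nat.eq_zero_or_pos (w i).length with h | h
      · exfalso
        have hnil : w i = [] := List.length_eq_zero_iff.1 h
        obtain ⟨j, hj⟩ := (by decide : ∀ i : Fin 3, ∃ j, j ≠ i) i
        exact hpf i j (fun h' => hj h'.symm) (hnil ▸ List.nil_prefix)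
      · exact h
    have p01 : 3 ≤ (w 0).length + (w 1).length :=
      three_words _ _ (w 2) (hpf 0 1 (by decide)) (hpf 0 2 (by decide))
        (hpf 1 2 (by decide)) (hpf 2 0 (by decide))
    have p02 : 3 ≤ (w 0).length + (w 2).length :=
      three_words _ _ (w 1) (hpf 0 2 (by decide)) (hpf 0 1 (by decide))
        (hpf 2 1 (by decide)) (hpf 1 0 (by decide))
    have p12 : 3 ≤ (w 1).length + (w 2).length :=
      three_words _ _ (w 0) (hpf 1 2 (by decide)) (hpf 1 0 (by decide))
        (hpf 2 0 (by decide)) (hpf 0 1 (by decide))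
    have e01 := hcol 0 1 (by simp only [AdjC5]; decide)
    have e12 := hcol 1 2 (by simp only [AdjC5]; decide)
    have e23 := hcol 2 3 (by simp only [AdjC5]; decide)
    have e34 := hcol 3 4 (by simp only [AdjC5]; decide)
    have e40 := hcol 4 0 (by simp only [AdjC5]; decide)
    have hkey : 8 ≤ (w (c 0)).length + (w (c 1)).length + (w (c 2)).length
        + (w (c 3)).length + (w (c 4)).length :=
      key (fun i => (w i).length) c p01 p02 p12 (q 0) (q 1) (q 2) e01 e12 e23 e34 e40
    rw [Fin.sum_univ_five]
    have : (8:ℝ) ≤ ((w (c 0)).length : ℝ) + (w (c 1)).length + (w (c 2)).length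
        + (w (c 3)).length + (w (c 4)).length := by exact_mod_cast hkey
    linarith
  · refine ⟨![[false,false],[true],[false],[true],[false,true]], ?_, ?_⟩
    · simp only [AdjC5]; decide
    · rw [Fin.sum_univ_five]
      rw [show (![[false,false],[true],[false],[true],[false,true]] : Fin 5 → List Bool) 2 = [false] from rfl, show (![[false,false],[true],[false],[true],[false,true]] : Fin 5 → List Bool) 3 = [true] from rfl, show (![[false,false],[true],[false],[true],[false,true]] : Fin 5 → List Bool) 4 = [false,true] from rfl]
      norm_num
end
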